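/- If a random variable X taking values in the non-negative integers is infinitely divisible with integer-valued components (i.e., for every n ≥ 1 there exist i.i.d. non-negative integer-valued random variables X_{1n}, ..., X_{nn} whose sum has the same distribution as X), then P(X = 0) > 0. -/
import Mathlib


open scoped ENNReal

/-- Convolution of two probability mass functions on ℕ:
the distribution of the sum of two independent random variables. -/
noncomputable def pmfConv (p q : PMF ℕ) : PMF ℕ :=
  p.bind fun a => q.map fun b => a + b

/-- `pmfConvPow p n` is the distribution of the sum of `n` i.i.d. random variables
each distributed according to `p`. -/
noncomputable def pmfConvPow (p : PMF ℕ) : ℕ → PMF ℕ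
  | 0 => PMF.pure 0
  | n + 1 => pmfConv p (pmfConvPow p n)

lemma pmfConv_apply (p q : PMF ℕ) (k : ℕ) :
    pmfConv p q k = ∑' a, p a * ∑' b, if k = a + b then q b else 0 := by
  simp [pmfConv, PMF.bind_apply, PMF.map_apply]
  exact tsum_congr fun a => by congr 1; exact tsum_congr fun b => by congr

lemma pmfConv_zero (p q : PMF ℕ) : pmfConv p q 0 = p 0 * q 0 := by
  rw [pmfConv_apply]
  rw [tsum_eq_single 0 (by
    intro a ha
    have : (∑' b, if 0 = a + b then q b else 0) = 0 := by
      apply ENNReal.tsum_eq_zero.mpr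
      intro b
      have : ¬ (0 = a + b) := by omega
      simp [this]
    simp [this])]
  congr 1
  rw [tsum_eq_single 0 (by intro b hb; simp [Nat.eq_zero_of_add_eq_zero_left, hb]; omega)]
  simp

lemma pmfConvPow_zero_apply (ν : PMF ℕ) (n : ℕ) : pmfConvPow ν n 0 = ν 0 ^ n := by
  induction n with
  | zero => simp [pmfConvPow]
  | succ n ih => rw [pmfConvPow, pmfConv_zero, ih, pow_succ]; ring

lemma pmfConvPow_small (ν : PMF ℕ) (h0 : ν 0 = 0) :
    ∀ n k, k < n → pmfConvPow ν n k = 0 := by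
  intro n
  induction n with
  | zero => intro k hk; omega
  | succ n ih =>
    intro k hk
    rw [pmfConvPow, pmfConv_apply]
    apply ENNReal.tsum_eq_zero.mpr
    intro a
    rcases Nat.eq_zero_or_pos a with rfl | ha
    · simp [h0]
    · have : (∑' b, if k = a + b then pmfConvPow ν n b else 0) = 0 := by
        apply ENNReal.tsum_eq_zero.mpr
        intro b
        by_cases hb : k = a + b
        · have : b < n := by omega
          simp [hb, ih b this]
        · simp [hb]
      simp [this]

/-- **Theorem 1.** If a random variable `X` on `{0,1,2,...}` is infinitely divisible with
integer-valued components (for every `n ≥ 1` there are i.i.d. non-negative integer-valued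
`X_{1n}, ..., X_{nn}` whose sum is distributed as `X`), then `P(X = 0) > 0`. -/
theorem pos_mass_at_zero_of_infdiv_integer_components
    (X : PMF ℕ)
    (hID : ∀ n : ℕ, 1 ≤ n → ∃ ν : PMF ℕ, pmfConvPow ν n = X) :
    0 < X 0 := by
  by_contra h
  have hX0 : X 0 = 0 := by
    simpa [pos_iff_ne_zero] using h
  have hall : ∀ k, X k = 0 := by
    intro k
    obtain ⟨ν, hν⟩ := hID (k + 1) (by omega)
    have hν0 : ν 0 = 0 := by
      have : ν 0 ^ (k + 1) = 0 := by
        rw [← pmfConvPow_zero_apply, hν, hX0]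
      exact pow_eq_zero_iff (by omega) |>.mp this
    rw [← hν]
    exact pmfConvPow_small ν hν0 (k + 1) k (by omega)
  have := X.tsum_coe
  simp [hall] at this
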